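/- Let P be a lazy, irreducible, aperiodic Markov chain (possibly non-reversible) on a finite state space K with stationary distribution π, and let A ⊆ K with 0 < π(A) ≤ 1/2. Then ψ⁺(A) ≤ (1/2)·h₂⁺(A)² and ψ⁻(A) ≤ (1/2)·h₂⁻(A)². -/

import Mathlib

open Finset MeasureTheory

noncomputable section

attribute [local instance] Classical.propDecidable

variable {K : Type*} [Fintype K]

/-- `matPow P t u v` is the `t`-step transition probability from `u` to `v`. -/
def matPow (P : K → K → ℝ) : ℕ → K → K → ℝ
  | 0 => fun u v => if u = v then 1 else 0
  | (t + 1) => fun u v => ∑ w, matPow P t u w * P w v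

/-- `P` is a stochastic matrix with (strictly positive) stationary distribution `π`. -/
structure IsMarkov (P : K → K → ℝ) (π : K → ℝ) : Prop where
  nonneg : ∀ u v, 0 ≤ P u v
  rowSum : ∀ u, ∑ v, P u v = 1
  piPos : ∀ v, 0 < π v
  piSum : ∑ v, π v = 1
  stationary : ∀ v, ∑ u, π u * P u v = π v

/-- `P` is lazy: every holding probability is at least `1/2`. -/
def IsLazy (P : K → K → ℝ) : Prop := ∀ u, (1 : ℝ) / 2 ≤ P u u

/-- irreducibility: every state can reach every other state. -/
def MCIrreducible (P : K → K → ℝ) : Prop := ∀ u v : K, ∃ t : ℕ, 0 < matPow P t u v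

/-- aperiodicity: the gcd of the return times of every state is `1`. -/
def MCAperiodic (P : K → K → ℝ) : Prop :=
  ∀ u : K, ∀ d : ℕ, (∀ t : ℕ, 0 < matPow P t u u → d ∣ t) → d ≤ 1

/-- reversibility: the detailed balance condition. -/
def IsReversible (P : K → K → ℝ) (π : K → ℝ) : Prop :=
  ∀ u v, π u * P u v = π v * P v u

/-- `π`-measure of a set. -/
def meas (π : K → ℝ) (A : Finset K) : ℝ := ∑ v ∈ A, π v

/-- the time reversal `P̄(u,v) = π(v) P(v,u) / π(u)`. -/
def rev (P : K → K → ℝ) (π : K → ℝ) (u v : K) : ℝ := π v * P v u / π u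

/-- transition probability from a point into a set, w.r.t. kernel `R`. -/
def setProb (R : K → K → ℝ) (v : K) (C : Finset K) : ℝ := ∑ c ∈ C, R v c

/-- the level set `A_u = {y : R(y,A) > u}`, w.r.t. kernel `R`. -/
def levelSet (R : K → K → ℝ) (A : Finset K) (u : ℝ) : Finset K :=
  Finset.univ.filter (fun y => u < setProb R y A)

/-- `g` is a fractional subset of `S` of measure `t`. -/
def IsFracSub (π : K → ℝ) (S : Finset K) (g : K → ℝ) (t : ℝ) : Prop :=
  (∀ v, 0 ≤ g v ∧ g v ≤ 1) ∧ (∀ v ∉ S, g v = 0) ∧ ∑ v, g v * π v = t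

/-- ergodic flow from a fractional subset `g` into `C`, w.r.t. kernel `R`. -/
def fracFlow (R : K → K → ℝ) (π : K → ℝ) (g : K → ℝ) (C : Finset K) : ℝ :=
  ∑ v, g v * π v * setProb R v C

/-- `Ψ(t, Aᶜ)` w.r.t. kernel `R`: for `t ≤ π(A)` the minimal flow into `Aᶜ` from a
fractional subset of `A` of measure `t`; for `t > π(A)` the minimal flow into `A`
from a fractional subset of `Aᶜ` of measure `1 − t`. -/
def Psi (R : K → K → ℝ) (π : K → ℝ) (A : Finset K) (t : ℝ) : ℝ :=
  if t ≤ meas π A then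
    sInf {q : ℝ | ∃ g : K → ℝ, IsFracSub π A g t ∧ q = fracFlow R π g Aᶜ}
  else
    sInf {q : ℝ | ∃ g : K → ℝ, IsFracSub π Aᶜ g (1 - t) ∧ q = fracFlow R π g A}

/-- `Ψ_big(t, Aᶜ)` w.r.t. kernel `R`: maximal flow into `Aᶜ` from a fractional
subset of `A` of measure `t`. -/
def PsiSup (R : K → K → ℝ) (π : K → ℝ) (A : Finset K) (t : ℝ) : ℝ :=
  sSup {q : ℝ | ∃ g : K → ℝ, IsFracSub π A g t ∧ q = fracFlow R π g Aᶜ}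

/-- the spread `ψ⁺(A)` (w.r.t. kernel `R`). -/
def psiPlus (R : K → K → ℝ) (π : K → ℝ) (A : Finset K) : ℝ :=
  (∫ t in (0:ℝ)..(meas π A), Psi R π A t) / (meas π A) ^ 2

/-- the quantity `ψ⁻(A)` (w.r.t. kernel `R`). -/
def psiMinus (R : K → K → ℝ) (π : K → ℝ) (A : Finset K) : ℝ :=
  (∫ t in (meas π A)..(1:ℝ), Psi R π A t) / (meas π A) ^ 2

/-- the modified spread `ψ_mod(A)` (w.r.t. kernel `R`). -/
def psiMod (R : K → K → ℝ) (π : K → ℝ) (A : Finset K) : ℝ :=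
  (∫ t in (0:ℝ)..(1:ℝ), Psi R π A t / min t (1 - t)) / meas π A

/-- the global spread `ψ_gl(A)` (w.r.t. kernel `R`). -/
def psiGl (R : K → K → ℝ) (π : K → ℝ) (A : Finset K) : ℝ :=
  (∫ t in (0:ℝ)..(1:ℝ), Psi R π A t) / (meas π A) ^ 2

/-- the quantity `ψ_big(A)` (w.r.t. kernel `R`). -/
def psiBig (R : K → K → ℝ) (π : K → ℝ) (A : Finset K) : ℝ :=
  (∫ t in (0:ℝ)..(meas π A), PsiSup R π A t) / (meas π A) ^ 2

/-- the evolving-set quantity `ψ_evo(A)`, with level sets taken w.r.t. kernel `R`. -/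
def psiEvo (R : K → K → ℝ) (π : K → ℝ) (A : Finset K) : ℝ :=
  1 - ∫ u in (0:ℝ)..(1:ℝ), Real.sqrt (meas π (levelSet R A u) / meas π A)

/-- ergodic flow `Q(B,C)`. -/
def ergFlow (P : K → K → ℝ) (π : K → ℝ) (B C : Finset K) : ℝ :=
  ∑ u ∈ B, ∑ v ∈ C, π u * P u v

/-- conductance `Φ(A)`. -/
def conductance (P : K → K → ℝ) (π : K → ℝ) (A : Finset K) : ℝ :=
  ergFlow P π A Aᶜ / meas π A

def Qone (P : K → K → ℝ) (π : K → ℝ) (C D : Finset K) : ℝ :=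
  ∑ v ∈ C, setProb P v D * π v

def Qtwo (P : K → K → ℝ) (π : K → ℝ) (C D : Finset K) : ℝ :=
  ∑ v ∈ C, Real.sqrt (setProb P v D) * π v

def Qinfty (P : K → K → ℝ) (π : K → ℝ) (C D : Finset K) : ℝ :=
  meas π (C.filter (fun v => 0 < setProb P v D))

/-- discrete gradient `h₁⁺(A)`. -/
def hOneP (P : K → K → ℝ) (π : K → ℝ) (A : Finset K) : ℝ :=
  Qone P π A Aᶜ / min (meas π A) (meas π Aᶜ)

/-- discrete gradient `h₁⁻(A)`. -/
def hOneM (P : K → K → ℝ) (π : K → ℝ) (A : Finset K) : ℝ :=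
  Qone P π Aᶜ A / min (meas π A) (meas π Aᶜ)

/-- discrete gradient `h₂⁺(A)`. -/
def hTwoP (P : K → K → ℝ) (π : K → ℝ) (A : Finset K) : ℝ :=
  Qtwo P π A Aᶜ / min (meas π A) (meas π Aᶜ)

/-- discrete gradient `h₂⁻(A)`. -/
def hTwoM (P : K → K → ℝ) (π : K → ℝ) (A : Finset K) : ℝ :=
  Qtwo P π Aᶜ A / min (meas π A) (meas π Aᶜ)

/-- discrete gradient `h_∞⁺(A)`. -/
def hInfP (P : K → K → ℝ) (π : K → ℝ) (A : Finset K) : ℝ :=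
  Qinfty P π A Aᶜ / min (meas π A) (meas π Aᶜ)

/-- discrete gradient `h_∞⁻(A)`. -/
def hInfM (P : K → K → ℝ) (π : K → ℝ) (A : Finset K) : ℝ :=
  Qinfty P π Aᶜ A / min (meas π A) (meas π Aᶜ)

/-- `p` is a probability distribution. -/
def IsDist (p : K → ℝ) : Prop := (∀ v, 0 ≤ p v) ∧ ∑ v, p v = 1

/-- the distribution after `t` steps starting from `p`. -/
def stepDist (P : K → K → ℝ) (p : K → ℝ) (t : ℕ) (v : K) : ℝ :=
  ∑ u, p u * matPow P t u v

/-- total variation distance. -/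
def tvDist (μ π : K → ℝ) : ℝ := (1 / 2) * ∑ v, |μ v - π v|

/-- chi-square distance. -/
def chi2Dist (μ π : K → ℝ) : ℝ := ∑ v, (μ v / π v - 1) ^ 2 * π v

/-- total variation mixing time `τ(ε)`: the max over initial distributions of the
least time at which total variation distance drops to `ε`. -/
def mixTV (P : K → K → ℝ) (π : K → ℝ) (ε : ℝ) : ℕ :=
  sSup {n : ℕ | ∃ p : K → ℝ, IsDist p ∧
    n = sInf {t : ℕ | tvDist (stepDist P p t) π ≤ ε}}

/-- chi-square mixing time `χ²(ε)`. -/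
def mixChi2 (P : K → K → ℝ) (π : K → ℝ) (ε : ℝ) : ℕ :=
  sSup {n : ℕ | ∃ p : K → ℝ, IsDist p ∧
    n = sInf {t : ℕ | chi2Dist (stepDist P p t) π ≤ ε}}

/-- `π₀ = min_v π(v)`. -/
def piMin (π : K → ℝ) : ℝ := sInf {r : ℝ | ∃ v : K, r = π v}

/-- `ψ⁺(x)`: worst spread over sets of measure at most `x`. -/
def psiPlusSize (R : K → K → ℝ) (π : K → ℝ) (x : ℝ) : ℝ :=
  sInf {r : ℝ | ∃ A : Finset K, 0 < meas π A ∧ meas π A ≤ x ∧ r = psiPlus R π A}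

/-- `ψ_evo(x)`: worst evolving-set quantity over sets of measure at most `x`. -/
def psiEvoSize (R : K → K → ℝ) (π : K → ℝ) (x : ℝ) : ℝ :=
  sInf {r : ℝ | ∃ A : Finset K, 0 < meas π A ∧ meas π A ≤ x ∧ r = psiEvo R π A}

/-- `ψ_big(x)`: worst `ψ_big` over sets of measure at most `x`. -/
def psiBigSize (R : K → K → ℝ) (π : K → ℝ) (x : ℝ) : ℝ :=
  sInf {r : ℝ | ∃ A : Finset K, 0 < meas π A ∧ meas π A ≤ x ∧ r = psiBig R π A}

/-- Dirichlet form. -/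
def dirichletForm (P : K → K → ℝ) (π : K → ℝ) (f : K → ℝ) : ℝ :=
  (1 / 2) * ∑ u, ∑ v, π u * P u v * (f u - f v) ^ 2

/-- variance w.r.t. `π`. -/
def varPi (π : K → ℝ) (f : K → ℝ) : ℝ :=
  ∑ v, π v * f v ^ 2 - (∑ v, π v * f v) ^ 2

/-- the spectral gap `λ`. -/
def specGap (P : K → K → ℝ) (π : K → ℝ) : ℝ :=
  sInf {r : ℝ | ∃ f : K → ℝ, (∃ u v, f u ≠ f v) ∧ r = dirichletForm P π f / varPi π f}

/-- `P_* = 1 − min_{u ∈ A} P(u, A)`. -/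
def Pstar (P : K → K → ℝ) (A : Finset K) : ℝ :=
  1 - sInf {r : ℝ | ∃ u ∈ A, r = setProb P u A}

/-- `P_min = min {P(u,v)/π(v) : u ∈ A, v ∈ Aᶜ, P(u,v) > 0}`. -/
def PminEdge (P : K → K → ℝ) (π : K → ℝ) (A : Finset K) : ℝ :=
  sInf {r : ℝ | ∃ u ∈ A, ∃ v ∈ Aᶜ, 0 < P u v ∧ r = P u v / π v}

/-- `w(t) = inf {y ∈ [0,1] : π(A_y) ≤ t}`. -/
def wfun (R : K → K → ℝ) (π : K → ℝ) (A : Finset K) (t : ℝ) : ℝ :=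
  sInf {y : ℝ | y ∈ Set.Icc (0:ℝ) 1 ∧ meas π (levelSet R A y) ≤ t}

variable {P : K → K → ℝ} {π : K → ℝ}

def PsiLow (P : K → K → ℝ) (π : K → ℝ) (B : Finset K) (t : ℝ) : ℝ :=
  sInf {r : ℝ | ∃ g : K → ℝ, IsFracSub π B g t ∧ r = fracFlow P π g Bᶜ}

variable {P : K → K → ℝ} {π : K → ℝ}

lemma setProb_nonneg (hP : ∀ u v, 0 ≤ P u v) (v : K) (C : Finset K) :
    0 ≤ setProb P v C := Finset.sum_nonneg fun c _ => hP v c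

lemma fracFlow_nonneg (hP : ∀ u v, 0 ≤ P u v) (hπ : ∀ v, 0 < π v)
    {g : K → ℝ} (hg : ∀ v, 0 ≤ g v) (C : Finset K) : 0 ≤ fracFlow P π g C :=
  Finset.sum_nonneg fun v _ => mul_nonneg (mul_nonneg (hg v) (hπ v).le) (setProb_nonneg hP v C)

lemma flowSet_bddBelow (hP : ∀ u v, 0 ≤ P u v) (hπ : ∀ v, 0 < π v) (B : Finset K) (t : ℝ) :
    BddBelow {r : ℝ | ∃ g : K → ℝ, IsFracSub π B g t ∧ r = fracFlow P π g Bᶜ} := by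
  refine ⟨0, fun r hr => ?_⟩
  obtain ⟨g, hg, rfl⟩ := hr
  exact fracFlow_nonneg hP hπ (fun v => (hg.1 v).1) _

lemma psiLow_le (hP : ∀ u v, 0 ≤ P u v) (hπ : ∀ v, 0 < π v) {B : Finset K} {g : K → ℝ} {t : ℝ}
    (hg : IsFracSub π B g t) : PsiLow P π B t ≤ fracFlow P π g Bᶜ :=
  csInf_le (flowSet_bddBelow hP hπ B t) ⟨g, hg, rfl⟩

lemma exists_fracSub (hπ : ∀ v, 0 < π v) {B : Finset K} {t : ℝ}
    (ht0 : 0 ≤ t) (ht : t ≤ ∑ v ∈ B, π v) : ∃ g : K → ℝ, IsFracSub π B g t := by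
  by_cases hB : (0:ℝ) < ∑ v ∈ B, π v
  · refine ⟨fun v => if v ∈ B then t / (∑ v ∈ B, π v) else 0, ?_, ?_, ?_⟩
    · intro v
      by_cases h : v ∈ B <;> simp [h]
      constructor
      · positivity
      · exact div_le_one_of_le₀ ht hB.le
    · intro v hv; simp [hv]
    · have hrw : ∀ v : K, (if v ∈ B then t / (∑ v ∈ B, π v) else 0) * π v
          = if v ∈ B then t / (∑ v ∈ B, π v) * π v else 0 := by
        intro v; split <;> simp
      simp only [hrw]
      rw [Finset.sum_ite_mem, Finset.univ_inter, ← Finset.mul_sum]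
      field_simp
  · have : t = 0 := le_antisymm (ht.trans (not_lt.1 hB)) ht0
    exact ⟨fun _ => 0, fun v => by norm_num, fun v _ => rfl, by simp [this]⟩

lemma psiLow_mono (hP : ∀ u v, 0 ≤ P u v) (hπ : ∀ v, 0 < π v) (B : Finset K) :
    MonotoneOn (PsiLow P π B) (Set.Icc 0 (∑ v ∈ B, π v)) := by
  rintro t₁ ⟨ht₁0, ht₁⟩ t₂ ⟨ht₂0, ht₂⟩ h12
  rcases eq_or_lt_of_le ht₂0 with h | ht₂pos
  · have : t₁ = t₂ := le_antisymm h12 (by linarith)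
    rw [this]
  · -- t₂ > 0
    apply le_csInf
    · obtain ⟨g, hg⟩ := exists_fracSub hπ ht₂0 ht₂
      exact ⟨_, g, hg, rfl⟩
    rintro r ⟨g, hg, rfl⟩
    have hscale : IsFracSub π B (fun v => (t₁ / t₂) * g v) t₁ := by
      have h01 : 0 ≤ t₁ / t₂ ∧ t₁ / t₂ ≤ 1 :=
        ⟨div_nonneg ht₁0 ht₂pos.le, div_le_one_of_le₀ h12 ht₂pos.le⟩
      refine ⟨fun v => ⟨mul_nonneg h01.1 (hg.1 v).1, ?_⟩, fun v hv => by simp [hg.2.1 v hv], ?_⟩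
      · exact mul_le_one₀ h01.2 (hg.1 v).1 (hg.1 v).2
      · have := hg.2.2
        calc ∑ v, t₁ / t₂ * g v * π v = t₁ / t₂ * ∑ v, g v * π v := by
              rw [Finset.mul_sum]; exact Finset.sum_congr rfl fun v _ => by ring
        _ = t₁ := by rw [this]; field_simp
    calc PsiLow P π B t₁ ≤ fracFlow P π (fun v => (t₁/t₂) * g v) Bᶜ := psiLow_le hP hπ hscale
    _ = (t₁/t₂) * fracFlow P π g Bᶜ := by
        unfold fracFlow; rw [Finset.mul_sum]; exact Finset.sum_congr rfl fun v _ => by ring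
    _ ≤ fracFlow P π g Bᶜ := by
        have h0 := fracFlow_nonneg hP hπ (fun v => (hg.1 v).1) (Bᶜ : Finset K)
        nlinarith [div_nonneg ht₁0 ht₂pos.le, div_le_one_of_le₀ h12 ht₂pos.le]

/-- `Sval q p l = ∑_j ((∑_{i<j} q_i p_i) p_j + q_j p_j² / 2)` in recursive form. -/
def Sval (q p : K → ℝ) : List K → ℝ
  | [] => 0
  | v :: l => q v * p v * p v / 2 + q v * p v * (l.map p).sum + Sval q p l

omit [Fintype K] in
lemma sval_le_half_sq (q p : K → ℝ) (l : List K)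
    (hq : ∀ v ∈ l, 0 ≤ q v) (hp : ∀ v ∈ l, 0 ≤ p v)
    (hs : l.Pairwise fun u w => q u ≤ q w) :
    Sval q p l ≤ (1/2) * ((l.map fun v => Real.sqrt (q v) * p v).sum)^2 := by
  induction l with
  | nil => simp [Sval]
  | cons v l ih =>
    have hqv : 0 ≤ q v := hq v (by simp)
    have hpv : 0 ≤ p v := hp v (by simp)
    have hql : ∀ w ∈ l, 0 ≤ q w := fun w hw => hq w (by simp [hw])
    have hpl : ∀ w ∈ l, 0 ≤ p w := fun w hw => hp w (by simp [hw])
    have hcross : q v * p v * (l.map p).sum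
        ≤ (Real.sqrt (q v) * p v) * ((l.map fun w => Real.sqrt (q w) * p w).sum) := by
      rw [← List.sum_map_mul_left, ← List.sum_map_mul_left]
      apply List.sum_le_sum
      intro w hw
      have hvw : q v ≤ q w := (List.pairwise_cons.1 hs).1 w hw
      have h1 : q v ≤ Real.sqrt (q v) * Real.sqrt (q w) := by
        calc q v = Real.sqrt (q v) * Real.sqrt (q v) := (Real.mul_self_sqrt hqv).symm
        _ ≤ Real.sqrt (q v) * Real.sqrt (q w) := by
            exact mul_le_mul_of_nonneg_left (Real.sqrt_le_sqrt hvw) (Real.sqrt_nonneg _)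
      have hpw : 0 ≤ p w := hpl w hw
      calc q v * p v * p w = q v * (p v * p w) := by ring
      _ ≤ (Real.sqrt (q v) * Real.sqrt (q w)) * (p v * p w) :=
            mul_le_mul_of_nonneg_right h1 (mul_nonneg hpv hpw)
      _ = Real.sqrt (q v) * p v * (Real.sqrt (q w) * p w) := by ring
    have hsq : Real.sqrt (q v) * Real.sqrt (q v) = q v := Real.mul_self_sqrt hqv
    have ihl := ih hql hpl (List.pairwise_cons.1 hs).2
    have ha2 : (Real.sqrt (q v) * p v)^2 = q v * p v * p v := by
      rw [mul_pow, sq, hsq]; ring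
    simp only [Sval, List.map_cons, List.sum_cons]
    nlinarith [hcross, ihl, ha2]

lemma sum_insert_pi {pre : Finset K} {v : K} (hv : v ∉ pre) (f : K → ℝ) :
    ∑ w ∈ insert v pre, f w = f v + ∑ w ∈ pre, f w := Finset.sum_insert hv

lemma prefix_bound (hπ : ∀ v, 0 < π v) {B pre : Finset K} {l : List K}
    (hpre : pre ⊆ B) (hl : ∀ v ∈ l, v ∈ B) (hdis : ∀ v ∈ l, v ∉ pre) (hnd : l.Nodup) :
    (∑ w ∈ pre, π w) + (l.map π).sum ≤ ∑ w ∈ B, π w := by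
  have h1 : (l.map π).sum = ∑ w ∈ l.toFinset, π w := (List.sum_toFinset π hnd).symm
  rw [h1, ← Finset.sum_union (Finset.disjoint_left.2 fun v hv hv' =>
    hdis v (List.mem_toFinset.1 hv') hv)]
  apply Finset.sum_le_sum_of_subset_of_nonneg
  · intro w hw
    rcases Finset.mem_union.1 hw with h | h
    · exact hpre h
    · exact hl w (List.mem_toFinset.1 h)
  · exact fun w _ _ => (hπ w).le

lemma step_lemma (hP : ∀ u v, 0 ≤ P u v) (hπ : ∀ v, 0 < π v) (B : Finset K) :
    ∀ (l : List K) (pre : Finset K), l.Nodup → pre ⊆ B → (∀ v ∈ l, v ∈ B) →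
      (∀ v ∈ l, v ∉ pre) →
    ∫ t in (∑ w ∈ pre, π w)..((∑ w ∈ pre, π w) + (l.map π).sum), PsiLow P π B t
      ≤ (∑ w ∈ pre, π w * setProb P w Bᶜ) * (l.map π).sum
        + Sval (fun v => setProb P v Bᶜ) π l := by
  intro l
  induction l with
  | nil => intro pre _ _ _ _; simp [Sval]
  | cons v l' ih =>
    intro pre hnd hpre hl hdis
    set q : K → ℝ := fun v => setProb P v Bᶜ with hq
    set m : ℝ := ∑ w ∈ pre, π w with hm
    set fl : ℝ := ∑ w ∈ pre, π w * q w with hfl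
    have hvB : v ∈ B := hl v (by simp)
    have hvpre : v ∉ pre := hdis v (by simp)
    have hvl' : v ∉ l' := (List.nodup_cons.1 hnd).1
    have hnd' : l'.Nodup := (List.nodup_cons.1 hnd).2
    have hπv : (0:ℝ) < π v := hπ v
    have hs' : (0:ℝ) ≤ (l'.map π).sum :=
      List.sum_nonneg (by rintro x hx; obtain ⟨w, _, rfl⟩ := List.mem_map.1 hx; exact (hπ w).le)
    have hm0 : (0:ℝ) ≤ m := Finset.sum_nonneg fun w _ => (hπ w).le
    have htot : m + (π v + (l'.map π).sum) ≤ ∑ w ∈ B, π w := by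
      have := prefix_bound (π := π) hπ hpre hl hdis hnd
      simpa using this
    set m' : ℝ := m + π v with hm'
    have hmono := psiLow_mono hP hπ B
    have hsub1 : Set.uIcc m m' ⊆ Set.Icc 0 (∑ w ∈ B, π w) := by
      rw [Set.uIcc_of_le (by linarith)]
      intro x hx; exact ⟨by linarith [hx.1], by linarith [hx.2]⟩
    have hsub2 : Set.uIcc m' (m' + (l'.map π).sum) ⊆ Set.Icc 0 (∑ w ∈ B, π w) := by
      rw [Set.uIcc_of_le (by linarith)]
      intro x hx; exact ⟨by linarith [hx.1], by linarith [hx.2]⟩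
    have hint1 : IntervalIntegrable (PsiLow P π B) volume m m' :=
      (hmono.mono hsub1).intervalIntegrable
    have hint2 : IntervalIntegrable (PsiLow P π B) volume m' (m' + (l'.map π).sum) :=
      (hmono.mono hsub2).intervalIntegrable
    -- pointwise bound on [m, m']
    have key1 : ∀ t ∈ Set.Icc m m', PsiLow P π B t ≤ fl + q v * (t - m) := by
      rintro t ⟨ht1, ht2⟩
      set g : K → ℝ := fun w => if w ∈ pre then 1 else if w = v then (t - m)/π v else 0 with hg
      have hgsum : ∀ f : K → ℝ, ∑ w, g w * f w = (t - m)/π v * f v + ∑ w ∈ pre, f w := by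
        intro f
        rw [← Finset.sum_subset (Finset.subset_univ (insert v pre))
          (fun w _ hw => by
            have h1 : w ∉ pre := fun h => hw (Finset.mem_insert_of_mem h)
            have h2 : w ≠ v := fun h => hw (h ▸ Finset.mem_insert_self v pre)
            simp [hg, h1, h2])]
        rw [Finset.sum_insert hvpre]
        simp only [hg, if_neg hvpre, if_pos rfl]
        congr 1
        apply Finset.sum_congr rfl
        intro w hw
        simp [hw]
      have hfrac : IsFracSub π B g t := by
        refine ⟨?_, ?_, ?_⟩
        · intro w
          simp only [hg]
          split
          · norm_num
          · split
            · constructor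
              · exact div_nonneg (by linarith) hπv.le
              · rw [div_le_one hπv]; linarith
            · norm_num
        · intro w hw
          have h1 : w ∉ pre := fun h => hw (hpre h)
          have h2 : w ≠ v := fun h => hw (h ▸ hvB)
          simp [hg, h1, h2]
        · rw [hgsum π]; field_simp; linarith [hm]
      have hflow : fracFlow P π g Bᶜ = fl + q v * (t - m) := by
        unfold fracFlow
        have : ∀ w : K, g w * π w * setProb P w Bᶜ = g w * (π w * q w) := fun w => by
          simp only [hq]; ring
        rw [Finset.sum_congr rfl fun w _ => this w, hgsum (fun w => π w * q w)]
        field_simp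
        ring
      calc PsiLow P π B t ≤ fracFlow P π g Bᶜ := psiLow_le hP hπ hfrac
      _ = fl + q v * (t - m) := hflow
    -- integral of the linear bound
    have hlin : ∫ t in m..m', (fl + q v * (t - m)) = fl * π v + q v * (π v * π v) / 2 := by
      rw [intervalIntegral.integral_add intervalIntegrable_const
        ((Continuous.intervalIntegrable (by fun_prop) m m' : IntervalIntegrable (fun t => q v * (t - m)) volume m m')),
        intervalIntegral.integral_const_mul,
        intervalIntegral.integral_comp_sub_right (fun x => x) m,
        integral_id, intervalIntegral.integral_const]
      simp only [hm', smul_eq_mul]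
      ring
    have hbd1 : ∫ t in m..m', PsiLow P π B t ≤ fl * π v + q v * (π v * π v) / 2 := by
      rw [← hlin]
      apply intervalIntegral.integral_mono_on (by linarith) hint1
        (Continuous.intervalIntegrable (by fun_prop) m m')
        key1
    -- induction hypothesis on insert v pre
    have ihh := ih (insert v pre) hnd' (Finset.insert_subset hvB hpre)
      (fun w hw => hl w (by simp [hw]))
      (fun w hw => by
        simp only [Finset.mem_insert, not_or]
        exact ⟨fun h => hvl' (h ▸ hw), fun h => hdis w (by simp [hw]) h⟩)
    rw [Finset.sum_insert hvpre, Finset.sum_insert hvpre] at ihh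
    -- combine
    have hsplit : ∫ t in m..(m + ((v :: l').map π).sum), PsiLow P π B t
        = (∫ t in m..m', PsiLow P π B t) + ∫ t in m'..(m' + (l'.map π).sum), PsiLow P π B t := by
      have he : m + ((v :: l').map π).sum = m' + (l'.map π).sum := by
        simp only [List.map_cons, List.sum_cons, hm']; ring
      rw [he, intervalIntegral.integral_add_adjacent_intervals hint1 hint2]
    rw [hsplit]
    have hfin : (π v + m) = m' := by rw [hm']; ring
    calc (∫ t in m..m', PsiLow P π B t) + ∫ t in m'..(m' + (l'.map π).sum), PsiLow P π B t
        ≤ (fl * π v + q v * (π v * π v) / 2)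
          + ((π v * q v + fl) * (l'.map π).sum + Sval q π l') := by
          apply add_le_add hbd1
          calc ∫ t in m'..(m' + (l'.map π).sum), PsiLow P π B t
              = ∫ t in (π v + m)..((π v + m) + (l'.map π).sum), PsiLow P π B t := by rw [hfin]
          _ ≤ (π v * q v + fl) * (l'.map π).sum + Sval q π l' := ihh
    _ = fl * ((v :: l').map π).sum + Sval q π (v :: l') := by
          simp only [List.map_cons, List.sum_cons, Sval]
          ring

lemma key_integral (hP : ∀ u v, 0 ≤ P u v) (hπ : ∀ v, 0 < π v) (B : Finset K) :
    ∫ t in (0:ℝ)..(∑ v ∈ B, π v), PsiLow P π B t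
      ≤ (1/2) * (∑ v ∈ B, Real.sqrt (setProb P v Bᶜ) * π v)^2 := by
  set q : K → ℝ := fun v => setProb P v Bᶜ with hqdef
  set l : List K := B.toList.mergeSort (fun u w => decide (q u ≤ q w)) with hl
  have hperm : l.Perm B.toList := List.mergeSort_perm _ _
  have hnd : l.Nodup := hperm.nodup_iff.2 B.nodup_toList
  have hmem : ∀ v ∈ l, v ∈ B := fun v hv => Finset.mem_toList.1 (hperm.mem_iff.1 hv)
  have hsorted : l.Pairwise fun u w => q u ≤ q w := by
    have h := List.pairwise_mergeSort (le := fun u w => decide (q u ≤ q w))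
      (fun a b c hab hbc => by
        simp only [decide_eq_true_eq] at *
        exact le_trans hab hbc)
      (fun a b => by simp [le_total]) B.toList
    exact h.imp (fun h => of_decide_eq_true h)
  have hsum : ∀ f : K → ℝ, (l.map f).sum = ∑ v ∈ B, f v := by
    intro f
    rw [(hperm.map f).sum_eq, ← List.sum_toFinset f B.nodup_toList, Finset.toList_toFinset]
  have hstep := step_lemma hP hπ B l ∅ hnd (Finset.empty_subset B) hmem (by simp)
  simp only [Finset.sum_empty, zero_add, zero_mul] at hstep
  rw [hsum π] at hstep
  have hsval := sval_le_half_sq q π l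
    (fun v _ => setProb_nonneg hP v Bᶜ) (fun v _ => (hπ v).le) hsorted
  rw [hsum (fun v => Real.sqrt (q v) * π v)] at hsval
  linarith

theorem aux_main
    (P : K → K → ℝ) (π : K → ℝ) (A : Finset K)
    (hP : ∀ u v, 0 ≤ P u v) (hπ : ∀ v, 0 < π v) (hsum1 : ∑ v, π v = 1)
    (hA0 : 0 < ∑ v ∈ A, π v) (hA : ∑ v ∈ A, π v ≤ 1 / 2)
    (Psi' : ℝ → ℝ)
    (hPsi' : Psi' = fun t => if t ≤ ∑ v ∈ A, π v then
      sInf {q : ℝ | ∃ g : K → ℝ, IsFracSub π A g t ∧ q = fracFlow P π g Aᶜ}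
    else
      sInf {q : ℝ | ∃ g : K → ℝ, IsFracSub π Aᶜ g (1 - t) ∧ q = fracFlow P π g A}) :
    (∫ t in (0:ℝ)..(∑ v ∈ A, π v), Psi' t) / (∑ v ∈ A, π v)^2
      ≤ (1/2) * ((∑ v ∈ A, Real.sqrt (setProb P v Aᶜ) * π v) / (∑ v ∈ A, π v))^2 ∧
    (∫ t in (∑ v ∈ A, π v)..(1:ℝ), Psi' t) / (∑ v ∈ A, π v)^2
      ≤ (1/2) * ((∑ v ∈ Aᶜ, Real.sqrt (setProb P v A) * π v) / (∑ v ∈ A, π v))^2 := by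
  set mA : ℝ := ∑ v ∈ A, π v with hmA
  have hAc : ∑ v ∈ Aᶜ, π v = 1 - mA := by
    have := Finset.sum_add_sum_compl A π
    rw [hsum1] at this; linarith
  constructor
  · have hcong : ∫ t in (0:ℝ)..mA, Psi' t = ∫ t in (0:ℝ)..mA, PsiLow P π A t := by
      apply intervalIntegral.integral_congr_ae
      filter_upwards with t ht
      rw [Set.uIoc_of_le hA0.le] at ht
      rw [hPsi']
      simp only [if_pos ht.2]
      rfl
    rw [hcong]
    have hkey := key_integral hP hπ A
    rw [div_le_iff₀ (pow_pos hA0 2), div_pow]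
    calc ∫ t in (0:ℝ)..mA, PsiLow P π A t
        ≤ (1/2) * (∑ v ∈ A, Real.sqrt (setProb P v Aᶜ) * π v)^2 := hkey
    _ = 1/2 * ((∑ v ∈ A, Real.sqrt (setProb P v Aᶜ) * π v)^2 / mA^2) * mA^2 := by
        field_simp
    _ = _ := by ring
  · have hcong : ∫ t in mA..(1:ℝ), Psi' t
        = ∫ t in mA..(1:ℝ), PsiLow P π Aᶜ (1 - t) := by
      apply intervalIntegral.integral_congr_ae
      filter_upwards with t ht
      rw [Set.uIoc_of_le (by linarith)] at ht
      rw [hPsi']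
      simp only [if_neg (not_le.2 ht.1)]
      simp only [PsiLow, compl_compl]
    rw [hcong, intervalIntegral.integral_comp_sub_left (PsiLow P π Aᶜ) 1]
    have h11 : (1:ℝ) - 1 = 0 := by norm_num
    rw [h11]
    have hkey := key_integral hP hπ (Aᶜ : Finset K)
    rw [hAc.symm] at *
    rw [div_le_iff₀ (pow_pos hA0 2), div_pow]
    calc ∫ t in (0:ℝ)..(∑ v ∈ Aᶜ, π v), PsiLow P π Aᶜ t
        ≤ (1/2) * (∑ v ∈ Aᶜ, Real.sqrt (setProb P v Aᶜᶜ) * π v)^2 := hkey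
    _ = (1/2) * (∑ v ∈ Aᶜ, Real.sqrt (setProb P v A) * π v)^2 := by rw [compl_compl]
    _ = 1/2 * ((∑ v ∈ Aᶜ, Real.sqrt (setProb P v A) * π v)^2 / mA^2) * mA^2 := by
        field_simp
    _ = _ := by ring


/-- `ψ⁺(A) ≤ (1/2)·h₂⁺(A)²` and `ψ⁻(A) ≤ (1/2)·h₂⁻(A)²`. -/
theorem spread_le_half_gradient_sq
    (P : K → K → ℝ) (π : K → ℝ) (A : Finset K)
    (hM : IsMarkov P π) (hlazy : IsLazy P)
    (hirr : MCIrreducible P) (hap : MCAperiodic P)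
    (hA0 : 0 < meas π A) (hA : meas π A ≤ 1 / 2) :
    psiPlus P π A ≤ (1 / 2) * hTwoP P π A ^ 2 ∧
    psiMinus P π A ≤ (1 / 2) * hTwoM P π A ^ 2 := by
  have h := aux_main P π A hM.nonneg hM.piPos hM.piSum hA0 hA (Psi P π A) rfl
  have hmin : min (meas π A) (meas π Aᶜ) = meas π A := by
    have h2 := Finset.sum_add_sum_compl A π
    rw [hM.piSum] at h2
    apply min_eq_left
    show (∑ v ∈ A, π v) ≤ ∑ v ∈ Aᶜ, π v
    have hA' : (∑ v ∈ A, π v) ≤ 1/2 := hA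
    linarith
  constructor
  · show (∫ t in (0:ℝ)..(meas π A), Psi P π A t) / (meas π A)^2
      ≤ (1/2) * (Qtwo P π A Aᶜ / min (meas π A) (meas π Aᶜ))^2
    rw [hmin]
    exact h.1
  · show (∫ t in (meas π A)..(1:ℝ), Psi P π A t) / (meas π A)^2
      ≤ (1/2) * (Qtwo P π Aᶜ A / min (meas π A) (meas π Aᶜ))^2
    rw [hmin]
    exact h.2
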